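/- Let Θ and A be nonempty finite sets, d a natural number, α > 0, σ₀ > 0, ω₀ ∈ EuclideanSpace ℝ (Fin d). Consider N experts; expert i has H_i transitions, where transition j carries a context-indexed action-feature map Φ_{i,j} : Θ → A → EuclideanSpace ℝ (Fin d) and a demonstrated action a_{i,j} ∈ A, and expert i carries context weights w_i : Θ → ℝ with w_i θ > 0 (the prior over contexts times the ω-independent transition likelihood factors). Define z_{i,j}(θ, ω) = ∑_{a ∈ A} exp(⟪Φ_{i,j} θ a, ω⟫ / α), the per-context likelihood L_i(θ, ω) = ∏_{j < H_i} exp(⟪Φ_{i,j} θ (a_{i,j}), ω⟫ / α) / z_{i,j}(θ, ω), and the unnormalized posterior F(ω) = exp(−‖ω − ω₀‖² / (2σ₀²)) * ∏_{i < N} ∑_{θ ∈ Θ} w_i θ * L_i(θ, ω). Then F(ω) > 0, ω ↦ log F(ω) is differentiable everywhere, and α times its gradient at ω equals ∑_{i < N} ∑_{θ ∈ Θ} q_i(θ | ω) • ∑_{j < H_i} (Φ_{i,j} θ (a_{i,j}) − ∑_{a ∈ A} p_{i,j}(a | θ, ω) • Φ_{i,j} θ a) − (α / σ₀²) • (ω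 − ω₀), where q_i(θ | ω) = w_i θ * L_i(θ, ω) / ∑_{θ'} w_i θ' * L_i(θ', ω) and p_{i,j}(a | θ, ω) = exp(⟪Φ_{i,j} θ a, ω⟫ / α) / z_{i,j}(θ, ω). -/

import Mathlib

open Real Finset
open scoped RealInnerProductSpace

section helpers
variable {F : Type*} [NormedAddCommGroup F] [InnerProductSpace ℝ F] [CompleteSpace F]

lemma myHG_of {f : F → ℝ} {D : F →L[ℝ] ℝ} {g x : F}
    (h : HasFDerivAt f D x) (hd : ∀ y, D y = ⟪g, y⟫) : HasGradientAt f g x := by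
  rw [hasGradientAt_iff_hasFDerivAt]
  exact h.congr_fderiv (ContinuousLinearMap.ext fun y =>
    ((InnerProductSpace.toDual_apply_apply).trans (hd y).symm).symm)

lemma myHG_inner (v x : F) : HasGradientAt (fun y => ⟪v, y⟫) v x :=
  myHG_of (innerSL ℝ v).hasFDerivAt (fun _ => rfl)

lemma myHG_fd {f : F → ℝ} {g x : F} (h : HasGradientAt f g x) :
    HasFDerivAt f (InnerProductSpace.toDual ℝ F g) x :=
  (hasGradientAt_iff_hasFDerivAt).1 h

lemma myHG_comp {f : F → ℝ} {g x : F} {φ : ℝ → ℝ} {c : ℝ}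
    (hφ : HasDerivAt φ c (f x)) (h : HasGradientAt f g x) :
    HasGradientAt (fun y => φ (f y)) (c • g) x := by
  refine myHG_of (hφ.comp_hasFDerivAt x (myHG_fd h)) (fun y => ?_)
  simp [InnerProductSpace.toDual_apply_apply, real_inner_smul_left, smul_eq_mul]

lemma myHG_add {f₁ f₂ : F → ℝ} {g₁ g₂ x : F}
    (h₁ : HasGradientAt f₁ g₁ x) (h₂ : HasGradientAt f₂ g₂ x) :
    HasGradientAt (fun y => f₁ y + f₂ y) (g₁ + g₂) x := by
  refine myHG_of ((myHG_fd h₁).add (myHG_fd h₂)) (fun y => ?_)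
  simp [InnerProductSpace.toDual_apply_apply, inner_add_left]

lemma myHG_sub {f₁ f₂ : F → ℝ} {g₁ g₂ x : F}
    (h₁ : HasGradientAt f₁ g₁ x) (h₂ : HasGradientAt f₂ g₂ x) :
    HasGradientAt (fun y => f₁ y - f₂ y) (g₁ - g₂) x := by
  refine myHG_of ((myHG_fd h₁).sub (myHG_fd h₂)) (fun y => ?_)
  simp [InnerProductSpace.toDual_apply_apply, inner_sub_left]

lemma myHG_sum {ι : Type*} (s : Finset ι) {f : ι → F → ℝ} {g : ι → F} {x : F}
    (h : ∀ i ∈ s, HasGradientAt (f i) (g i) x) :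
    HasGradientAt (fun y => ∑ i ∈ s, f i y) (∑ i ∈ s, g i) x := by
  refine myHG_of (HasFDerivAt.fun_sum (fun i hi => myHG_fd (h i hi))) (fun y => ?_)
  simp [InnerProductSpace.toDual_apply_apply, sum_inner]

lemma myHG_const_mul {f : F → ℝ} {g x : F} (c : ℝ) (h : HasGradientAt f g x) :
    HasGradientAt (fun y => c * f y) (c • g) x :=
  myHG_comp (φ := fun t => c * t) (by simpa using (hasDerivAt_id (f x)).const_mul c) h

lemma myHG_sq (v x : F) :
    HasGradientAt (fun y => ⟪y - v, y - v⟫) ((2:ℝ) • (x - v)) x := by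
  have hid : HasFDerivAt (fun y : F => y - v) (ContinuousLinearMap.id ℝ F) x :=
    (hasFDerivAt_id x).sub_const v
  refine myHG_of (hid.inner ℝ hid) (fun y => ?_)
  simp only [ContinuousLinearMap.comp_apply, ContinuousLinearMap.prod_apply,
    fderivInnerCLM_apply, ContinuousLinearMap.id_apply]
  rw [real_inner_comm (x - v) y, ← two_mul, ← real_inner_smul_left]

end helpers

/-- Theorem 1 of the paper: the gradient of the contextual Bayesian IRL
log-posterior. The unnormalized posterior combines a Gaussian prior `N(ω₀, σ₀² I)`
with per-expert likelihoods that are mixtures over an unobserved finite context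
`θ` of products of Boltzmann action probabilities; α times the gradient of its log
is the posterior-context-weighted sum of feature differences minus
`(α/σ₀²) • (ω - ω₀)` (i.e., `(ω - ω₀)/ς₀²` with `ς₀² = σ₀²/α`). -/
theorem contextual_BIRL_logPosterior_gradient
    {Θ A : Type*} [Fintype Θ] [Nonempty Θ] [Fintype A] [Nonempty A] {d : ℕ}
    (α σ₀ : ℝ) (hα : 0 < α) (hσ₀ : 0 < σ₀)
    (ω₀ : EuclideanSpace ℝ (Fin d)) (N : ℕ) (H : Fin N → ℕ)
    (Φ : (i : Fin N) → Fin (H i) → Θ → A → EuclideanSpace ℝ (Fin d))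
    (act : (i : Fin N) → Fin (H i) → A)
    (w : Fin N → Θ → ℝ) (hw : ∀ i θ, 0 < w i θ)
    (z : (i : Fin N) → Fin (H i) → Θ → EuclideanSpace ℝ (Fin d) → ℝ)
    (hz : ∀ i j θ ω, z i j θ ω = ∑ a : A, Real.exp (⟪Φ i j θ a, ω⟫ / α))
    (L : Fin N → Θ → EuclideanSpace ℝ (Fin d) → ℝ)
    (hL : ∀ i θ ω, L i θ ω =
      ∏ j : Fin (H i), Real.exp (⟪Φ i j θ (act i j), ω⟫ / α) / z i j θ ω)
    (F : EuclideanSpace ℝ (Fin d) → ℝ)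
    (hF : ∀ ω, F ω =
      Real.exp (-‖ω - ω₀‖ ^ 2 / (2 * σ₀ ^ 2)) * ∏ i : Fin N, ∑ θ : Θ, w i θ * L i θ ω)
    (q : Fin N → Θ → EuclideanSpace ℝ (Fin d) → ℝ)
    (hq : ∀ i θ ω, q i θ ω = w i θ * L i θ ω / ∑ θ' : Θ, w i θ' * L i θ' ω)
    (p : (i : Fin N) → Fin (H i) → A → Θ → EuclideanSpace ℝ (Fin d) → ℝ)
    (hp : ∀ i j a θ ω, p i j a θ ω = Real.exp (⟪Φ i j θ a, ω⟫ / α) / z i j θ ω)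
    (ω : EuclideanSpace ℝ (Fin d)) :
    0 < F ω ∧
    Differentiable ℝ (fun ω' => Real.log (F ω')) ∧
    α • gradient (fun ω' => Real.log (F ω')) ω =
      (∑ i : Fin N, ∑ θ : Θ, q i θ ω •
        ∑ j : Fin (H i), (Φ i j θ (act i j) - ∑ a : A, p i j a θ ω • Φ i j θ a))
        - (α / σ₀ ^ 2) • (ω - ω₀) := by
  have hzpos : ∀ i j θ' ω', 0 < z i j θ' ω' := fun i j θ' ω' => by
    rw [hz]; exact Finset.sum_pos (fun a _ => Real.exp_pos _) Finset.univ_nonempty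
  have hLpos : ∀ i θ' ω', 0 < L i θ' ω' := fun i θ' ω' => by
    rw [hL]; exact Finset.prod_pos fun j _ => div_pos (Real.exp_pos _) (hzpos i j θ' ω')
  have hSpos : ∀ i ω', 0 < ∑ θ' : Θ, w i θ' * L i θ' ω' := fun i ω' =>
    Finset.sum_pos (fun θ' _ => mul_pos (hw i θ') (hLpos i θ' ω')) Finset.univ_nonempty
  have hFpos : ∀ ω', 0 < F ω' := fun ω' => by
    rw [hF]
    exact mul_pos (Real.exp_pos _) (Finset.prod_pos fun i _ => hSpos i ω')
  -- splitting the log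
  have hlog : ∀ ω', Real.log (F ω') =
      -‖ω' - ω₀‖ ^ 2 / (2 * σ₀ ^ 2) + ∑ i : Fin N, Real.log (∑ θ' : Θ, w i θ' * L i θ' ω') := by
    intro ω'
    rw [hF, Real.log_mul (Real.exp_ne_zero _)
      (Finset.prod_pos fun i _ => hSpos i ω').ne', Real.log_exp,
      Real.log_prod fun i _ => (hSpos i ω').ne']
  -- L as exp of a sum
  have hLexp : ∀ (i : Fin N) (θ' : Θ) (y : EuclideanSpace ℝ (Fin d)),
      L i θ' y = Real.exp (∑ j : Fin (H i),
        (⟪Φ i j θ' (act i j), y⟫ / α - Real.log (z i j θ' y))) := by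
    intro i θ' y
    rw [hL, Real.exp_sum]
    exact Finset.prod_congr rfl fun j _ => by
      rw [Real.exp_sub, Real.exp_log (hzpos i j θ' y)]
  -- gradient of z
  have hgz : ∀ i j θ' ω', HasGradientAt (z i j θ')
      (∑ a : A, (Real.exp (⟪Φ i j θ' a, ω'⟫ / α) * (1 / α)) • Φ i j θ' a) ω' := by
    intro i j θ' ω'
    have hzf : z i j θ' = fun y => ∑ a : A, Real.exp (⟪Φ i j θ' a, y⟫ / α) :=
      funext (hz i j θ')
    rw [hzf]
    refine myHG_sum _ fun a _ => ?_
    exact myHG_comp (φ := fun t => Real.exp (t / α))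
      (((hasDerivAt_id (⟪Φ i j θ' a, ω'⟫ : ℝ)).div_const α).exp)
      (myHG_inner (Φ i j θ' a) ω')
  -- gradient of L
  have key : ∀ (i : Fin N) (θ' : Θ) (ω' : EuclideanSpace ℝ (Fin d)),
      HasGradientAt (L i θ') ((L i θ' ω' * α⁻¹) •
        ∑ j : Fin (H i), (Φ i j θ' (act i j) - ∑ a : A, p i j a θ' ω' • Φ i j θ' a)) ω' := by
    intro i θ' ω'
    have hT : ∀ j : Fin (H i), HasGradientAt
        (fun y => ⟪Φ i j θ' (act i j), y⟫ / α - Real.log (z i j θ' y))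
        ((1 / α) • Φ i j θ' (act i j) - (z i j θ' ω')⁻¹ •
          ∑ a : A, (Real.exp (⟪Φ i j θ' a, ω'⟫ / α) * (1 / α)) • Φ i j θ' a) ω' := by
      intro j
      refine myHG_sub ?_ ?_
      · exact myHG_comp (φ := fun t => t / α)
          ((hasDerivAt_id (⟪Φ i j θ' (act i j), ω'⟫ : ℝ)).div_const α)
          (myHG_inner (Φ i j θ' (act i j)) ω')
      · exact myHG_comp (Real.hasDerivAt_log (hzpos i j θ' ω').ne') (hgz i j θ' ω')
    have hTg := myHG_sum Finset.univ (fun j _ => hT j)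
    have hres := (myHG_comp (Real.hasDerivAt_exp _) hTg).congr_of_eventuallyEq
      (Filter.Eventually.of_forall (hLexp i θ'))
    have hGT : (∑ j : Fin (H i), ((1 / α) • Φ i j θ' (act i j) - (z i j θ' ω')⁻¹ •
          ∑ a : A, (Real.exp (⟪Φ i j θ' a, ω'⟫ / α) * (1 / α)) • Φ i j θ' a)) =
        α⁻¹ • ∑ j : Fin (H i),
          (Φ i j θ' (act i j) - ∑ a : A, p i j a θ' ω' • Φ i j θ' a) := by
      rw [Finset.smul_sum]
      refine Finset.sum_congr rfl fun j _ => ?_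
      rw [smul_sub]
      congr 1
      · rw [one_div]
      · rw [Finset.smul_sum, Finset.smul_sum]
        refine Finset.sum_congr rfl fun a _ => ?_
        simp only [smul_smul]
        rw [hp]
        congr 1
        rw [div_eq_mul_inv]
        ring
    rw [hGT, ← hLexp i θ' ω', smul_smul] at hres
    exact hres
  -- gradient of log of the expert mixture
  have hglogS : ∀ (i : Fin N) (ω' : EuclideanSpace ℝ (Fin d)),
      HasGradientAt (fun y => Real.log (∑ θ' : Θ, w i θ' * L i θ' y))
        (α⁻¹ • ∑ θ' : Θ, q i θ' ω' • ∑ j : Fin (H i),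
          (Φ i j θ' (act i j) - ∑ a : A, p i j a θ' ω' • Φ i j θ' a)) ω' := by
    intro i ω'
    have hgS := myHG_sum Finset.univ (fun θ' (_ : θ' ∈ Finset.univ) =>
      myHG_const_mul (w i θ') (key i θ' ω'))
    have hres := myHG_comp (f := fun y => ∑ θ' : Θ, w i θ' * L i θ' y)
      (Real.hasDerivAt_log (hSpos i ω').ne') hgS
    have hsc : ((∑ θ' : Θ, w i θ' * L i θ' ω')⁻¹ • ∑ θ' : Θ, w i θ' • (L i θ' ω' * α⁻¹) •
          ∑ j : Fin (H i), (Φ i j θ' (act i j) - ∑ a : A, p i j a θ' ω' • Φ i j θ' a)) =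
        α⁻¹ • ∑ θ' : Θ, q i θ' ω' • ∑ j : Fin (H i),
          (Φ i j θ' (act i j) - ∑ a : A, p i j a θ' ω' • Φ i j θ' a) := by
      rw [Finset.smul_sum, Finset.smul_sum]
      refine Finset.sum_congr rfl fun θ' _ => ?_
      simp only [smul_smul]
      rw [hq]
      congr 1
      field_simp
    rw [hsc] at hres
    exact hres
  -- gradient of the prior term
  have hprior : ∀ ω' : EuclideanSpace ℝ (Fin d),
      HasGradientAt (fun y => -‖y - ω₀‖ ^ 2 / (2 * σ₀ ^ 2))
        (-(σ₀ ^ 2)⁻¹ • (ω' - ω₀)) ω' := by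
    intro ω'
    have h1 := myHG_comp (f := fun y => (⟪y - ω₀, y - ω₀⟫ : ℝ)) (φ := fun t => -t / (2 * σ₀ ^ 2))
      (((hasDerivAt_id (⟪ω' - ω₀, ω' - ω₀⟫ : ℝ)).neg).div_const (2 * σ₀ ^ 2))
      (myHG_sq ω₀ ω')
    have h3 : (-1 / (2 * σ₀ ^ 2)) • ((2:ℝ) • (ω' - ω₀)) = -(σ₀ ^ 2)⁻¹ • (ω' - ω₀) := by
      rw [smul_smul]
      congr 1
      field_simp
    rw [h3] at h1
    exact h1.congr_of_eventuallyEq (Filter.Eventually.of_forall fun y => by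
      simp only [real_inner_self_eq_norm_sq])
  -- total gradient
  have hg : ∀ ω' : EuclideanSpace ℝ (Fin d),
      HasGradientAt (fun y => Real.log (F y))
        (-(σ₀ ^ 2)⁻¹ • (ω' - ω₀) + ∑ i : Fin N, α⁻¹ • ∑ θ' : Θ, q i θ' ω' •
          ∑ j : Fin (H i), (Φ i j θ' (act i j) - ∑ a : A, p i j a θ' ω' • Φ i j θ' a)) ω' := by
    intro ω'
    have := myHG_add (hprior ω') (myHG_sum Finset.univ
      (fun i (_ : i ∈ Finset.univ) => hglogS i ω'))
    exact this.congr_of_eventuallyEq (Filter.Eventually.of_forall hlog)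
  refine ⟨hFpos ω, fun ω' => (hg ω').differentiableAt, ?_⟩
  rw [(hg ω).gradient, smul_add]
  have h1 : α • ((∑ i : Fin N, α⁻¹ • ∑ θ' : Θ, q i θ' ω •
        ∑ j : Fin (H i), (Φ i j θ' (act i j) - ∑ a : A, p i j a θ' ω • Φ i j θ' a))) =
      ∑ i : Fin N, ∑ θ' : Θ, q i θ' ω •
        ∑ j : Fin (H i), (Φ i j θ' (act i j) - ∑ a : A, p i j a θ' ω • Φ i j θ' a) := by
    rw [Finset.smul_sum]
    exact Finset.sum_congr rfl fun i _ => by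
      rw [smul_smul, mul_inv_cancel₀ hα.ne', one_smul]
  have h2 : α • (-(σ₀ ^ 2)⁻¹ • (ω - ω₀)) = -((α / σ₀ ^ 2) • (ω - ω₀)) := by
    rw [smul_smul, ← neg_smul]
    congr 1
    ring
  rw [h1, h2, neg_add_eq_sub]
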